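/- Let k be a field, V = k^n with basis e_1, …, e_n, and let the symmetric group S_n act on the symmetric algebra Sym(V) by algebra automorphisms via σ·e_i = e_{σ(i)}. Let G be a subgroup of S_n, let λ_1, …, λ_n ∈ k be nonzero elements with λ_i/λ_j ≠ λ_s/λ_t for all indices with i ≠ j, s ≠ t and (i,j) ≠ (s,t), and set f := ∏_{σ∈G} σ·(λ_1e_1 + ⋯ + λ_ne_n) ∈ Sym^{|G|}(V). Then the stabilizer of f in S_n equals G: {τ ∈ S_n : τ·f = f} = G. -/

import Mathlib

open MvPolynomial
open Finset

noncomputable def gpL {k : Type*} [Field k] {n : ℕ} (lam : Fin n → k)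
    (π : Equiv.Perm (Fin n)) : MvPolynomial (Fin n) k :=
  ∑ i, C (lam i) * X (π i)

section gp
variable {k : Type*} [Field k] {n : ℕ} (lam : Fin n → k)

lemma gpL_eq_rename (π : Equiv.Perm (Fin n)) :
    rename (⇑π) (∑ i : Fin n, C (lam i) * X i) = gpL lam π := by
  simp [gpL, map_sum]

lemma rename_gpL (τ π : Equiv.Perm (Fin n)) :
    rename (⇑τ) (gpL lam π) = gpL lam (τ * π) := by
  simp [gpL, map_sum, Equiv.Perm.mul_apply]

lemma gpL_eq_sum_inv (π : Equiv.Perm (Fin n)) :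
    gpL lam π = ∑ j, C (lam (π⁻¹ j)) * X j :=
  Fintype.sum_equiv π _ _ (fun i => by simp)

lemma coeff_gpL (π : Equiv.Perm (Fin n)) (j : Fin n) :
    coeff (Finsupp.single j 1) (gpL lam π) = lam (π⁻¹ j) := by
  rw [gpL_eq_sum_inv]
  rw [coeff_sum]
  rw [Finset.sum_eq_single j]
  · simp [coeff_X']
  · intro b _ hb
    simp [coeff_C_mul, coeff_X', Finsupp.single_left_inj (one_ne_zero (α := ℕ)), hb]
  · simp

lemma constantCoeff_gpL (π : Equiv.Perm (Fin n)) :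
    coeff 0 (gpL lam π) = 0 := by
  rw [gpL, coeff_sum]
  refine Finset.sum_eq_zero fun i _ => ?_
  rw [coeff_C_mul, coeff_X']
  simp [Finsupp.single_eq_zero]

end gp

section gp2
variable {k : Type*} [Field k] {n : ℕ}

lemma coeff_single_one_mul (p q : MvPolynomial (Fin n) k) (j : Fin n) :
    coeff (Finsupp.single j 1) (p * q) =
      coeff 0 p * coeff (Finsupp.single j 1) q +
        coeff (Finsupp.single j 1) p * coeff 0 q := by
  rw [coeff_mul, Finsupp.antidiagonal_single, Finset.sum_map]
  rw [show Finset.HasAntidiagonal.antidiagonal (1 : ℕ) = {(0, 1), (1, 0)} from rfl]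
  simp [Finsupp.single_zero]

lemma prime_linear_form {m : ℕ} (μ : Fin (m + 1) → k) (hμ : μ 0 ≠ 0) :
    Prime (∑ j, C (μ j) * X j : MvPolynomial (Fin (m + 1)) k) := by
  classical
  set S : MvPolynomial (Fin (m + 1)) k := ∑ j ∈ univ.erase 0, C (μ j) * X j with hS
  have key : (∑ j, C (μ j) * X j : MvPolynomial (Fin (m + 1)) k) = C (μ 0) * X 0 + S :=
    (Finset.add_sum_erase _ _ (mem_univ 0)).symm
  set g : Fin (m + 1) → MvPolynomial (Fin (m + 1)) k :=
    fun i => if i = 0 then C (μ 0)⁻¹ * (X 0 - S) else X i with hg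
  set h : Fin (m + 1) → MvPolynomial (Fin (m + 1)) k :=
    fun i => if i = 0 then ∑ j, C (μ j) * X j else X i with hh
  have g0 : g 0 = C (μ 0)⁻¹ * (X 0 - S) := if_pos rfl
  have gX : ∀ i : Fin (m + 1), i ≠ 0 → g i = X i := fun i hi => if_neg hi
  have h0 : h 0 = ∑ j, C (μ j) * X j := if_pos rfl
  have hX : ∀ i : Fin (m + 1), i ≠ 0 → h i = X i := fun i hi => if_neg hi
  have hgS : aeval g S = S := by
    rw [hS, map_sum]
    refine Finset.sum_congr rfl fun j hj => ?_
    rw [map_mul, aeval_C, aeval_X, gX j (Finset.mem_erase.mp hj).1, algebraMap_eq]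
  have hhS : aeval h S = S := by
    rw [hS, map_sum]
    refine Finset.sum_congr rfl fun j hj => ?_
    rw [map_mul, aeval_C, aeval_X, hX j (Finset.mem_erase.mp hj).1, algebraMap_eq]
  have hgL : aeval g (∑ j, C (μ j) * X j) = X 0 := by
    rw [key, map_add, map_mul, aeval_C, aeval_X, hgS, g0, algebraMap_eq,
      ← mul_assoc, ← C_mul, mul_inv_cancel₀ hμ, C_1, one_mul, sub_add_cancel]
  have hinv : ∀ a, aeval h (aeval g a) = a := by
    have hcomp : (aeval h).comp (aeval g) = AlgHom.id k (MvPolynomial (Fin (m + 1)) k) := by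
      apply algHom_ext
      intro i
      rw [AlgHom.comp_apply, aeval_X, AlgHom.id_apply]
      by_cases hi : i = 0
      · subst hi
        rw [g0, map_mul, map_sub, aeval_C, aeval_X, hhS, h0, algebraMap_eq, key,
          add_sub_cancel_right, ← mul_assoc, ← C_mul, inv_mul_cancel₀ hμ, C_1, one_mul]
      · rw [gX i hi, aeval_X, hX i hi]
    intro a
    exact congrArg (· a) (congrArg DFunLike.coe hcomp) |>.trans rfl
  have hX0 : Prime (X 0 : MvPolynomial (Fin (m + 1)) k) := by
    rw [← MulEquiv.prime_iff (finSuccEquiv k m).toMulEquiv (p := (X 0 : MvPolynomial (Fin (m + 1)) k))]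
    have he : (finSuccEquiv k m).toMulEquiv (X 0 : MvPolynomial (Fin (m + 1)) k)
        = Polynomial.X := by exact finSuccEquiv_X_zero
    rw [he]
    exact Polynomial.prime_X
  exact comap_prime (aeval g) (aeval h) hinv (by rwa [hgL])

end gp2

section gp3
variable {k : Type*} [Field k] {n : ℕ}

lemma perm_eq_of_ratio {lam : Fin n → k} (hlam0 : ∀ i, lam i ≠ 0)
    (hlam : ∀ i j s t : Fin n, i ≠ j → s ≠ t → (i, j) ≠ (s, t) →
      lam i / lam j ≠ lam s / lam t)
    (π ρ : Equiv.Perm (Fin n)) (c : k)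
    (h : ∀ j, lam (π⁻¹ j) = lam (ρ⁻¹ j) * c) : π = ρ := by
  by_contra hne
  have hinv : π⁻¹ ≠ ρ⁻¹ := fun h' => hne (inv_injective h')
  obtain ⟨j1, hj1⟩ : ∃ j, π⁻¹ j ≠ ρ⁻¹ j := by
    by_contra h'
    push_neg at h'
    exact hinv (Equiv.ext h')
  set j2 := π (ρ⁻¹ j1) with hj2def
  have hππ : π⁻¹ j2 = ρ⁻¹ j1 := by simp [hj2def]
  have hj12 : j1 ≠ j2 := by
    intro hEq
    exact hj1 (by rw [hEq, hππ, hEq])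
  have hρ2 : π⁻¹ j2 ≠ ρ⁻¹ j2 := by
    rw [hππ]
    exact fun h' => hj12 ((ρ⁻¹ : Equiv.Perm (Fin n)).injective h')
  have hc1 : lam (π⁻¹ j1) / lam (ρ⁻¹ j1) = c :=
    div_eq_of_eq_mul (hlam0 _) ((h j1).trans (mul_comm _ _))
  have hc2 : lam (π⁻¹ j2) / lam (ρ⁻¹ j2) = c :=
    div_eq_of_eq_mul (hlam0 _) ((h j2).trans (mul_comm _ _))
  refine hlam (π⁻¹ j1) (ρ⁻¹ j1) (π⁻¹ j2) (ρ⁻¹ j2) hj1 hρ2 ?_ (hc1.trans hc2.symm)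
  intro hpair
  have : π⁻¹ j1 = π⁻¹ j2 := by
    have := congrArg Prod.fst hpair
    simpa using this
  exact hj12 ((π⁻¹ : Equiv.Perm (Fin n)).injective this)

end gp3

/-- (Remark after Proposition 8 in Gordeev–Popov): let `k` be a field and identify
`Sym(k^n)` with the polynomial ring `k[e_1,…,e_n]`, on which `S_n` acts by
`σ·e_i = e_{σ(i)}`.  Let `G ≤ S_n`, let `λ_1,…,λ_n ∈ k` be nonzero with
`λ_i/λ_j ≠ λ_s/λ_t` whenever `i ≠ j`, `s ≠ t` and `(i,j) ≠ (s,t)`, and set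
`f = ∏_{σ ∈ G} σ·(λ_1 e_1 + ⋯ + λ_n e_n)`.  Then the stabilizer of `f` in `S_n`
equals `G`. -/
theorem stmt14 {k : Type*} [Field k] (n : ℕ)
    (G : Subgroup (Equiv.Perm (Fin n))) [Fintype G]
    (lam : Fin n → k) (hlam0 : ∀ i, lam i ≠ 0)
    (hlam : ∀ i j s t : Fin n, i ≠ j → s ≠ t → (i, j) ≠ (s, t) →
      lam i / lam j ≠ lam s / lam t)
    (f : MvPolynomial (Fin n) k)
    (hf : f = ∏ σ : G, rename (⇑(σ : Equiv.Perm (Fin n)))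
      (∑ i : Fin n, C (lam i) * X i)) :
    {τ : Equiv.Perm (Fin n) | rename (⇑τ) f = f} = (G : Set (Equiv.Perm (Fin n))) := by
  classical
  have hfp : f = ∏ σ : G, gpL lam (σ : Equiv.Perm (Fin n)) := by
    rw [hf]
    exact Finset.prod_congr rfl fun σ _ => gpL_eq_rename lam _
  have hren : ∀ τ : Equiv.Perm (Fin n),
      rename (⇑τ) f = ∏ σ : G, gpL lam (τ * (σ : Equiv.Perm (Fin n))) := by
    intro τ
    rw [hfp, map_prod]
    exact Finset.prod_congr rfl fun σ _ => rename_gpL lam _ _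
  ext τ
  simp only [Set.mem_setOf_eq, SetLike.mem_coe]
  constructor
  · intro hτ
    rcases n with _ | m
    · have : τ = 1 := Equiv.ext fun i => i.elim0
      rw [this]; exact G.one_mem
    · have hdvd : gpL lam τ ∣ f := by
        rw [← hτ, hren τ]
        have hτ1 : gpL lam τ = gpL lam (τ * ((⟨1, G.one_mem⟩ : G) : Equiv.Perm (Fin (m + 1)))) := by
          norm_num
        rw [hτ1]
        exact Finset.dvd_prod_of_mem _ (Finset.mem_univ (⟨1, G.one_mem⟩ : G))
      have hprime : Prime (gpL lam τ) := by
        rw [gpL_eq_sum_inv]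
        exact prime_linear_form _ (hlam0 _)
      rw [hfp] at hdvd
      obtain ⟨σ0, -, hσd⟩ := hprime.exists_mem_finset_dvd hdvd
      obtain ⟨g, hg⟩ := hσd
      set c := coeff 0 g with hc
      have hcoeff : ∀ j, lam (((σ0 : Equiv.Perm (Fin (m + 1))))⁻¹ j) = lam (τ⁻¹ j) * c := by
        intro j
        have := congrArg (coeff (Finsupp.single j 1)) hg
        rwa [coeff_gpL, coeff_single_one_mul, constantCoeff_gpL, zero_mul, zero_add,
          coeff_gpL] at this
      have : (σ0 : Equiv.Perm (Fin (m + 1))) = τ :=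
        perm_eq_of_ratio hlam0 hlam _ _ c hcoeff
      rw [← this]
      exact σ0.2
  · intro hτ
    rw [hren τ, hfp]
    exact Fintype.prod_equiv (Equiv.mulLeft (⟨τ, hτ⟩ : G))
      (fun σ : G => gpL lam (τ * (σ : Equiv.Perm (Fin n))))
      (fun σ : G => gpL lam (σ : Equiv.Perm (Fin n)))
      (fun σ => rfl)
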